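/- Let σ be an involutive isometry of the weight space of a root system Φ with basis Δ such that σ(Φ) = Φ, and suppose for a simple root α ∈ Δ we have σ(ω_α) = -ω_{σ̄(α)} where σ̄ is an involution of a subset Δ₁ ⊆ Δ. Then for any integral weight λ with σ(λ) = -λ, λ is of the form λ = Σ_{α ∈ Δ₁} n_α ω_α with n_α ∈ ℤ and n_α = n_{σ̄(α)}. -/

import Mathlib

/-- if `σ` is an involution of the weight space with
`σ(ω_i) = -ω_{σ̄(i)}` for `i ∈ Δ₁`, `σ` preserving the span of the fundamental
weights for `Δ₀ = Δ \ Δ₁` with trivial `-1` eigenspace there, then any integral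
weight `λ` with `σ λ = -λ` is `λ = Σ_{i ∈ Δ₁} n_i ω_i` with `n_i = n_{σ̄(i)}`,
i.e. the coefficients of `λ` vanish outside `Δ₁` and are `σ̄`-symmetric. -/
theorem stmt_2 {E : Type*} [AddCommGroup E] [Module ℝ E]
    {ι : Type*} [Fintype ι] (b : Module.Basis ι ℝ E)   -- fundamental weights ω_i = b i
    (σ : E →ₗ[ℝ] E) (hinv : ∀ x, σ (σ x) = x)
    (Δ₁ : Set ι) (sb : ι → ι)
    (hsb₁ : ∀ i ∈ Δ₁, sb i ∈ Δ₁) (hsb₂ : ∀ i ∈ Δ₁, sb (sb i) = i)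
    (hσω : ∀ i ∈ Δ₁, σ (b i) = - b (sb i))
    (hpres : ∀ i ∉ Δ₁, σ (b i) ∈ Submodule.span ℝ (b '' {j | j ∉ Δ₁}))
    (hno : ∀ v ∈ Submodule.span ℝ (b '' {j | j ∉ Δ₁}), σ v = -v → v = 0)
    (lam : E) (n : ι → ℤ)
    (hlam : lam = ∑ i, (n i : ℝ) • b i)
    (hspecial : σ lam = -lam) :
    (∀ i ∉ Δ₁, n i = 0) ∧ (∀ i ∈ Δ₁, n i = n (sb i)) := by
  classical
  set s₀ : Finset ι := Finset.univ.filter (fun i => i ∉ Δ₁) with hs₀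
  set s₁ : Finset ι := Finset.univ.filter (fun i => i ∈ Δ₁) with hs₁
  set lam₀ : E := ∑ i ∈ s₀, (n i : ℝ) • b i with hlam₀
  set lam₁ : E := ∑ i ∈ s₁, (n i : ℝ) • b i with hlam₁
  -- repr of such sums
  have key : ∀ (s : Finset ι) (c : ι → ℝ) (j : ι),
      b.repr (∑ i ∈ s, c i • b i) j = if j ∈ s then c j else 0 := by
    intro s c j
    rw [map_sum, Finset.sum_apply']
    simp [Finsupp.single_apply, Finset.sum_ite_eq]
  have hsplit : lam = lam₀ + lam₁ := by
    rw [hlam, hlam₀, hlam₁,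
      ← Finset.sum_filter_add_sum_filter_not Finset.univ (fun i => i ∉ Δ₁)]
    congr 1
    apply Finset.sum_congr _ (fun _ _ => rfl)
    ext i; simp [hs₁]
  have hmem₀ : lam₀ ∈ Submodule.span ℝ (b '' {j | j ∉ Δ₁}) := by
    apply Submodule.sum_mem
    intro i hi
    exact Submodule.smul_mem _ _ (Submodule.subset_span ⟨i, by simpa [hs₀] using hi, rfl⟩)
  have hmem₀' : σ lam₀ ∈ Submodule.span ℝ (b '' {j | j ∉ Δ₁}) := by
    rw [hlam₀, map_sum]
    apply Submodule.sum_mem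
    intro i hi
    rw [map_smul]
    exact Submodule.smul_mem _ _ (hpres i (by simpa [hs₀] using hi))
  have hmem₁ : lam₁ ∈ Submodule.span ℝ (b '' Δ₁) := by
    apply Submodule.sum_mem
    intro i hi
    exact Submodule.smul_mem _ _ (Submodule.subset_span ⟨i, by simpa [hs₁] using hi, rfl⟩)
  have hσlam₁ : σ lam₁ = -∑ i ∈ s₁, (n i : ℝ) • b (sb i) := by
    rw [hlam₁, map_sum, ← Finset.sum_neg_distrib]
    apply Finset.sum_congr rfl
    intro i hi
    rw [map_smul, hσω i (by simpa [hs₁] using hi), smul_neg]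
  have hmem₁' : σ lam₁ ∈ Submodule.span ℝ (b '' Δ₁) := by
    rw [hσlam₁]
    apply Submodule.neg_mem
    apply Submodule.sum_mem
    intro i hi
    exact Submodule.smul_mem _ _
      (Submodule.subset_span ⟨sb i, hsb₁ i (by simpa [hs₁] using hi), rfl⟩)
  have hdisj : Disjoint (Submodule.span ℝ (b '' {j | j ∉ Δ₁})) (Submodule.span ℝ (b '' Δ₁)) :=
    b.linearIndependent.disjoint_span_image (by
      rw [Set.disjoint_left]; intro a ha; exact ha)
  -- the Δ₀ component satisfies σ v = -v
  have hkey : σ lam₀ + lam₀ = 0 := by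
    have heq : σ lam₀ + lam₀ = -(σ lam₁ + lam₁) := by
      have h1 : σ lam₀ + σ lam₁ + (lam₀ + lam₁) = 0 := by
        have := hspecial
        rw [hsplit, map_add] at this
        rw [this]; abel
      rw [eq_neg_iff_add_eq_zero,
        show σ lam₀ + lam₀ + (σ lam₁ + lam₁) = σ lam₀ + σ lam₁ + (lam₀ + lam₁) from by abel]
      exact h1
    refine Submodule.disjoint_def.mp hdisj _ (Submodule.add_mem _ hmem₀' hmem₀) ?_
    rw [heq]
    exact Submodule.neg_mem _ (Submodule.add_mem _ hmem₁' hmem₁)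
  have hlam₀0 : lam₀ = 0 := hno lam₀ hmem₀ (eq_neg_of_add_eq_zero_left hkey)
  have h0 : ∀ i ∉ Δ₁, n i = 0 := by
    intro i hi
    have : b.repr lam₀ i = 0 := by rw [hlam₀0]; simp
    rw [hlam₀, key] at this
    simp only [hs₀, Finset.mem_filter, Finset.mem_univ, true_and, if_pos hi] at this
    exact_mod_cast this
  refine ⟨h0, ?_⟩
  -- now use σ lam₁ = -lam₁
  have hmain : ∑ i ∈ s₁, (n i : ℝ) • b (sb i) = ∑ i ∈ s₁, (n i : ℝ) • b i := by
    have : σ lam₁ = -lam₁ := by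
      have := hspecial
      rw [hsplit, hlam₀0] at this
      simpa using this
    rw [hσlam₁, hlam₁] at this
    exact neg_injective this
  have hreindex : ∑ i ∈ s₁, (n i : ℝ) • b (sb i) = ∑ i ∈ s₁, (n (sb i) : ℝ) • b i := by
    refine Finset.sum_nbij' (fun i => sb i) (fun i => sb i) ?_ ?_ ?_ ?_ ?_
    · intro a ha; simpa [hs₁] using hsb₁ a (by simpa [hs₁] using ha)
    · intro a ha; simpa [hs₁] using hsb₁ a (by simpa [hs₁] using ha)
    · intro a ha; exact hsb₂ a (by simpa [hs₁] using ha)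
    · intro a ha; exact hsb₂ a (by simpa [hs₁] using ha)
    · intro a ha; rw [hsb₂ a (by simpa [hs₁] using ha)]
  intro i hi
  have hrepr : (n (sb i) : ℝ) = (n i : ℝ) := by
    have h := congrArg (fun v => b.repr v i) (hreindex ▸ hmain)
    rw [key, key] at h
    have hmem : i ∈ s₁ := by simp [hs₁, hi]
    rw [if_pos hmem, if_pos hmem] at h
    exact h
  exact_mod_cast hrepr.symm
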